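/- Let B be a subgroup of A and let H = ι_A(B) be the corresponding subgroup of G. Then H is normal in G if and only if φ₁(B) is a normal subgroup of G₁ and φ₂(B) is a normal subgroup of G₂. -/

import Mathlib

open Monoid

private theorem factor_normal_of_base_normal
    (A : Type) [Group A] (Gf : Bool → Type) [∀ i, Group (Gf i)] [∀ i, Finite (Gf i)]
    (φ : ∀ i : Bool, A →* Gf i) (hφ : ∀ i, Function.Injective (φ i))
    (B : Subgroup A) (hN : (B.map (PushoutI.base φ)).Normal) (i : Bool) :
    (B.map (φ i)).Normal := by
  constructor
  intro x hx g
  rcases hx with ⟨b, hb, rfl⟩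
  have h1 : PushoutI.base φ b ∈ B.map (PushoutI.base φ) := ⟨b, hb, rfl⟩
  have h2 := hN.conj_mem _ h1 (PushoutI.of (φ := φ) i g)
  rcases h2 with ⟨b', hb', hb'eq⟩
  refine ⟨b', hb', ?_⟩
  apply PushoutI.of_injective hφ i
  rw [PushoutI.of_apply_eq_base φ i b', hb'eq, ← PushoutI.of_apply_eq_base φ i b]
  simp [map_mul, map_inv]

/-- Let `B ≤ A` and let `H = ι_A(B)` be the corresponding subgroup of the amalgam
`G = G₁ *_A G₂` of finite groups. Then `H` is normal in `G` if and only if `φ₁(B)` is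
normal in `G₁` and `φ₂(B)` is normal in `G₂`. -/
theorem base_subgroup_normal_iff
    (A : Type) [Group A] (Gf : Bool → Type) [∀ i, Group (Gf i)] [∀ i, Finite (Gf i)]
    (φ : ∀ i : Bool, A →* Gf i) (hφ : ∀ i, Function.Injective (φ i))
    (B : Subgroup A) :
    (B.map (PushoutI.base φ)).Normal ↔
      (B.map (φ true)).Normal ∧ (B.map (φ false)).Normal := by
  constructor
  · intro hN
    exact ⟨factor_normal_of_base_normal A Gf φ hφ B hN true,
      factor_normal_of_base_normal A Gf φ hφ B hN false⟩
  · rintro ⟨ht, hf⟩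
    have hall : ∀ i, (B.map (φ i)).Normal := by rintro (_ | _) <;> assumption
    set H := B.map (PushoutI.base φ) with hH
    -- key: each generator conjugates H into H
    have key : ∀ (i : Bool) (g : Gf i) (b : A), b ∈ B →
        PushoutI.of (φ := φ) i g * PushoutI.base φ b * (PushoutI.of (φ := φ) i g)⁻¹ ∈ H := by
      intro i g b hb
      have := (hall i).conj_mem _ ⟨b, hb, rfl⟩ g
      rcases this with ⟨b', hb', hb'eq⟩
      refine ⟨b', hb', ?_⟩
      rw [← PushoutI.of_apply_eq_base φ i b', hb'eq, ← PushoutI.of_apply_eq_base φ i b]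
      simp [map_mul, map_inv, mul_assoc]
    have hof : ∀ (i : Bool) (g : Gf i), PushoutI.of (φ := φ) i g ∈ Subgroup.normalizer (H : Set (PushoutI φ)) := by
      intro i g
      rw [Subgroup.mem_normalizer_iff]
      intro h
      constructor
      · rintro ⟨b, hb, rfl⟩
        exact key i g b hb
      · rintro ⟨b, hb, hbeq⟩
        have := key i g⁻¹ b hb
        rw [hbeq] at this
        simpa [mul_assoc] using this
    have hnorm : ∀ g : PushoutI φ, g ∈ Subgroup.normalizer (H : Set (PushoutI φ)) := by
      intro g
      induction g using PushoutI.induction_on with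
      | of i g => exact hof i g
      | base h =>
        rw [← PushoutI.of_apply_eq_base φ true h]
        exact hof true (φ true h)
      | mul x y hx hy => exact mul_mem hx hy
    have : Subgroup.normalizer (H : Set (PushoutI φ)) = ⊤ := Subgroup.eq_top_iff' _ |>.2 hnorm
    exact Subgroup.normalizer_eq_top_iff.mp this
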